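/- Let P be an orthogonal projection on a complex Hilbert space H with complement P⊥ = I - P, let μ1, μ2, μ3, μ4 be complex numbers with μ1·μ4 = μ2·μ3, and let A ∈ B(H). Then ‖μ1 PAP + μ2 PAP⊥ + μ3 P⊥AP + μ4 P⊥AP⊥‖ ≤ max{|μ1|, |μ2|, |μ3|, |μ4|}·‖A‖. -/
import Mathlib

open scoped InnerProductSpace

lemma max_one_div_mul {c d : ℝ} (hd : 0 < d) : max 1 (c / d) * d = max d c := by
  rcases le_total c d with h | h
  · rw [max_eq_left ((div_le_one hd).mpr h), one_mul, max_eq_left h]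
  · rw [max_eq_right ((one_le_div hd).mpr h), div_mul_cancel₀ _ hd.ne', max_eq_right h]

lemma diag_norm_le {H : Type*} [NormedAddCommGroup H]
    [InnerProductSpace ℂ H] [CompleteSpace H]
    (P : H →L[ℂ] H) (hP : IsSelfAdjoint P) (hP2 : P * P = P)
    (a b : ℂ) : ‖a • P + b • (1 - P)‖ ≤ max ‖a‖ ‖b‖ := by
  have hM : (0:ℝ) ≤ max ‖a‖ ‖b‖ := le_trans (norm_nonneg a) (le_max_left _ _)
  refine ContinuousLinearMap.opNorm_le_bound _ hM fun x => ?_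
  have hadj : ContinuousLinearMap.adjoint P = P := hP.adjoint_eq
  have hinner : ⟪(P x : H), x - P x⟫_ℂ = 0 := by
    have h1 := ContinuousLinearMap.adjoint_inner_right P x (x - P x)
    rw [hadj] at h1
    have h2 : P (x - P x) = 0 := by
      have := congrArg (fun T : H →L[ℂ] H => T x) hP2
      simp only [ContinuousLinearMap.mul_apply] at this
      simp [map_sub, this]
    rw [← h1, h2, inner_zero_right]
  have pyth : ‖P x‖ * ‖P x‖ + ‖x - P x‖ * ‖x - P x‖ = ‖x‖ * ‖x‖ := by
    have := norm_add_sq_eq_norm_sq_add_norm_sq_of_inner_eq_zero (P x) (x - P x) hinner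
    rw [add_sub_cancel] at this
    linarith
  have hinner2 : ⟪a • (P x : H), b • (x - P x)⟫_ℂ = 0 := by
    rw [inner_smul_left, inner_smul_right, hinner]; ring
  have happ : (a • P + b • (1 - P)) x = a • P x + b • (x - P x) := by
    simp [ContinuousLinearMap.add_apply, ContinuousLinearMap.smul_apply,
      ContinuousLinearMap.sub_apply]
  have hexp := norm_add_sq_eq_norm_sq_add_norm_sq_of_inner_eq_zero _ _ hinner2
  rw [norm_smul, norm_smul] at hexp
  have ha2 : ‖a‖ * ‖a‖ ≤ max ‖a‖ ‖b‖ * max ‖a‖ ‖b‖ :=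
    mul_le_mul (le_max_left _ _) (le_max_left _ _) (norm_nonneg a) hM
  have hb2 : ‖b‖ * ‖b‖ ≤ max ‖a‖ ‖b‖ * max ‖a‖ ‖b‖ :=
    mul_le_mul (le_max_right _ _) (le_max_right _ _) (norm_nonneg b) hM
  have hsq : ‖(a • P + b • (1 - P)) x‖ ^ 2 ≤ (max ‖a‖ ‖b‖ * ‖x‖) ^ 2 := by
    rw [pow_two, pow_two, happ, hexp]
    nlinarith [mul_self_nonneg ‖P x‖, mul_self_nonneg ‖x - P x‖,
      mul_le_mul_of_nonneg_right ha2 (mul_self_nonneg ‖P x‖),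
      mul_le_mul_of_nonneg_right hb2 (mul_self_nonneg ‖x - P x‖)]
  exact le_of_pow_le_pow_left₀ two_ne_zero (by positivity) hsq

theorem corner_combination_norm_bound {H : Type*} [NormedAddCommGroup H]
    [InnerProductSpace ℂ H] [CompleteSpace H]
    (P : H →L[ℂ] H) (hP : IsSelfAdjoint P) (hP2 : P * P = P)
    (mu1 mu2 mu3 mu4 : ℂ) (hmu : mu1 * mu4 = mu2 * mu3) (A : H →L[ℂ] H) :
    ‖mu1 • (P * A * P) + mu2 • (P * A * (1 - P)) + mu3 • ((1 - P) * A * P)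
        + mu4 • ((1 - P) * A * (1 - P))‖
      ≤ max (max ‖mu1‖ ‖mu2‖) (max ‖mu3‖ ‖mu4‖) * ‖A‖ := by
  set M := max (max ‖mu1‖ ‖mu2‖) (max ‖mu3‖ ‖mu4‖) with hM
  obtain ⟨a1, a2, b1, b2, h11, h12, h21, h22, hbound⟩ :
      ∃ a1 a2 b1 b2 : ℂ, a1 * b1 = mu1 ∧ a1 * b2 = mu2 ∧ a2 * b1 = mu3 ∧
        a2 * b2 = mu4 ∧ max ‖a1‖ ‖a2‖ * max ‖b1‖ ‖b2‖ ≤ M := by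
    rcases le_total ‖mu2‖ ‖mu1‖ with hle | hle
    · by_cases h1 : mu1 = 0
      · have h2 : mu2 = 0 := by
          have : ‖mu2‖ ≤ 0 := by simpa [h1] using hle
          simpa using le_antisymm this (norm_nonneg _)
        refine ⟨0, 1, mu3, mu4, by simp [h1], by simp [h2], by simp, by simp, ?_⟩
        simp only [norm_zero, norm_one, max_eq_right zero_le_one, one_mul]
        exact le_max_right _ _
      · have hm1 : 0 < ‖mu1‖ := norm_pos_iff.mpr h1
        refine ⟨1, mu3 / mu1, mu1, mu2, one_mul _, one_mul _,
          div_mul_cancel₀ _ h1, ?_, ?_⟩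
        · field_simp
          linear_combination -hmu
        · rw [norm_one, norm_div, max_eq_left hle, max_one_div_mul hm1]
          exact max_le (le_trans (le_max_left _ _) (le_max_left _ _))
            (le_trans (le_max_left _ _) (le_max_right _ _))
    · by_cases h2 : mu2 = 0
      · have h1 : mu1 = 0 := by
          have : ‖mu1‖ ≤ 0 := by simpa [h2] using hle
          simpa using le_antisymm this (norm_nonneg _)
        refine ⟨0, 1, mu3, mu4, by simp [h1], by simp [h2], by simp, by simp, ?_⟩
        simp only [norm_zero, norm_one, max_eq_right zero_le_one, one_mul]
        exact le_max_right _ _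
      · have hm2 : 0 < ‖mu2‖ := norm_pos_iff.mpr h2
        refine ⟨1, mu4 / mu2, mu1, mu2, one_mul _, one_mul _, ?_,
          div_mul_cancel₀ _ h2, ?_⟩
        · field_simp
          linear_combination hmu
        · rw [norm_one, norm_div, max_eq_right hle, max_one_div_mul hm2]
          exact max_le (le_trans (le_max_right _ _) (le_max_left _ _))
            (le_trans (le_max_right _ _) (le_max_right _ _))
  have key : mu1 • (P * A * P) + mu2 • (P * A * (1 - P)) + mu3 • ((1 - P) * A * P)
      + mu4 • ((1 - P) * A * (1 - P))
      = (a1 • P + a2 • (1 - P)) * A * (b1 • P + b2 • (1 - P)) := by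
    simp only [add_mul, mul_add, smul_mul_assoc, mul_smul_comm]
    rw [← h11, ← h12, ← h21, ← h22]
    module
  rw [key]
  have hA1 : ‖a1 • P + a2 • (1 - P)‖ ≤ max ‖a1‖ ‖a2‖ := diag_norm_le P hP hP2 a1 a2
  have hA2 : ‖b1 • P + b2 • (1 - P)‖ ≤ max ‖b1‖ ‖b2‖ := diag_norm_le P hP hP2 b1 b2
  calc ‖(a1 • P + a2 • (1 - P)) * A * (b1 • P + b2 • (1 - P))‖
      ≤ ‖(a1 • P + a2 • (1 - P)) * A‖ * ‖b1 • P + b2 • (1 - P)‖ := norm_mul_le _ _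
    _ ≤ ‖a1 • P + a2 • (1 - P)‖ * ‖A‖ * ‖b1 • P + b2 • (1 - P)‖ := by
        gcongr; exact norm_mul_le _ _
    _ ≤ max ‖a1‖ ‖a2‖ * ‖A‖ * max ‖b1‖ ‖b2‖ := by
        gcongr <;> positivity
    _ = max ‖a1‖ ‖a2‖ * max ‖b1‖ ‖b2‖ * ‖A‖ := by ring
    _ ≤ M * ‖A‖ := mul_le_mul_of_nonneg_right hbound (norm_nonneg A)
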